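/- Fix τ ∈ (0,1). There exist c(τ) > 0 and n₀ such that for all n ≥ n₀ and all real x with τ < |x| ≤ πn, one has Σ_{i=1}^n sin²(x·i/(2n)) ≥ c(τ)·n. -/

import Mathlib

open Real Finset

lemma sum_cos_eq (θ : ℝ) (n : ℕ) :
    2 * Real.sin θ * ∑ i ∈ Finset.Icc 1 n, Real.cos (2 * i * θ) =
      Real.sin ((2 * n + 1) * θ) - Real.sin θ := by
  induction n with
  | zero => simp
  | succ n ih =>
    rw [Finset.sum_Icc_succ_top (by omega), mul_add, ih]
    have h := Real.sin_sub_sin ((2 * (n + 1 : ℕ) + 1) * θ) ((2 * (n : ℕ) + 1) * θ)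
    push_cast at h ⊢
    rw [show ((2 * ((n:ℝ) + 1) + 1) * θ - (2 * (n:ℝ) + 1) * θ) / 2 = θ by ring,
      show ((2 * ((n:ℝ) + 1) + 1) * θ + (2 * (n:ℝ) + 1) * θ) / 2 = 2 * ((n:ℝ) + 1) * θ by ring]
      at h
    linarith [h]

lemma sum_sq_cube (n : ℕ) : (n : ℝ) ^ 3 / 3 ≤ ∑ i ∈ Finset.Icc 1 n, (i : ℝ) ^ 2 := by
  induction n with
  | zero => simp
  | succ n ih =>
    rw [Finset.sum_Icc_succ_top (by omega)]
    push_cast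
    nlinarith [Nat.cast_nonneg (α := ℝ) n]

set_option maxHeartbeats 1000000 in
theorem stmt6 (τ : ℝ) (hτ : τ ∈ Set.Ioo (0:ℝ) 1) :
    ∃ c > (0:ℝ), ∃ n₀ : ℕ, ∀ n : ℕ, n₀ ≤ n → ∀ x : ℝ,
      τ < |x| → |x| ≤ Real.pi * n →
      c * n ≤ ∑ i ∈ Finset.Icc 1 n, Real.sin (x * i / (2 * n)) ^ 2 := by
  obtain ⟨hτ0, hτ1⟩ := hτ
  have hπ := Real.pi_pos
  refine ⟨min (τ ^ 2 / (3 * Real.pi ^ 2)) (1 / 4), by positivity, 1, ?_⟩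
  intro n hn x hx1 hx2
  have hn0 : (0 : ℝ) < n := by exact_mod_cast hn
  have hx0 : 0 < |x| := lt_trans hτ0 hx1
  set θ : ℝ := |x| / (2 * n) with hθdef
  have hθ0 : 0 < θ := div_pos hx0 (by positivity)
  have hθπ : θ ≤ Real.pi / 2 := by
    rw [hθdef, div_le_div_iff₀ (by positivity) (by norm_num)]
    nlinarith
  have hθτ : τ / (2 * n) < θ := by
    rw [hθdef, div_lt_div_iff₀ (by positivity) (by positivity)]
    nlinarith
  have hterm : ∀ i : ℕ, Real.sin (x * i / (2 * n)) ^ 2 = Real.sin (i * θ) ^ 2 := by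
    intro i
    rcases abs_choice x with h | h
    · rw [hθdef, h]; ring_nf
    · rw [hθdef, h, show (i : ℝ) * (-x / (2 * n)) = -(x * i / (2 * n)) by ring,
        Real.sin_neg, neg_pow, neg_one_sq, one_mul]
  rw [Finset.sum_congr rfl fun i _ => hterm i]
  rcases le_or_gt (θ * n) (Real.pi / 2) with hcase | hcase
  · -- small θ: use sin t ≥ 2t/π
    have hbound : ∀ i ∈ Finset.Icc 1 n, (2 / Real.pi) ^ 2 * θ ^ 2 * (i : ℝ) ^ 2 ≤
        Real.sin ((i : ℝ) * θ) ^ 2 := by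
      intro i hi
      simp only [Finset.mem_Icc] at hi
      have hi0 : (0 : ℝ) ≤ (i : ℝ) * θ := by positivity
      have hin : (i : ℝ) ≤ n := by exact_mod_cast hi.2
      have hi2 : (i : ℝ) * θ ≤ Real.pi / 2 := by nlinarith
      have := Real.mul_le_sin hi0 hi2
      have h2 : (0:ℝ) ≤ 2 / Real.pi * ((i:ℝ) * θ) := by positivity
      calc (2 / Real.pi) ^ 2 * θ ^ 2 * (i : ℝ) ^ 2 = (2 / Real.pi * ((i:ℝ) * θ)) ^ 2 := by ring
        _ ≤ Real.sin ((i : ℝ) * θ) ^ 2 := by nlinarith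
    have h1 : (2 / Real.pi) ^ 2 * θ ^ 2 * ((n:ℝ) ^ 3 / 3) ≤
        ∑ i ∈ Finset.Icc 1 n, Real.sin ((i : ℝ) * θ) ^ 2 := by
      calc (2 / Real.pi) ^ 2 * θ ^ 2 * ((n:ℝ) ^ 3 / 3)
          ≤ (2 / Real.pi) ^ 2 * θ ^ 2 * ∑ i ∈ Finset.Icc 1 n, (i : ℝ) ^ 2 := by
            have hnn : (0:ℝ) ≤ (2 / Real.pi) ^ 2 * θ ^ 2 := by positivity
            nlinarith [sum_sq_cube n]
        _ = ∑ i ∈ Finset.Icc 1 n, (2 / Real.pi) ^ 2 * θ ^ 2 * (i : ℝ) ^ 2 := by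
            rw [Finset.mul_sum]
        _ ≤ _ := Finset.sum_le_sum hbound
    have key : τ ^ 2 / (3 * Real.pi ^ 2) * n ≤ (2 / Real.pi) ^ 2 * θ ^ 2 * ((n:ℝ) ^ 3 / 3) := by
      have hτθ : τ ≤ θ * (2 * n) := by
        rw [← div_le_iff₀ (by positivity)]; exact hθτ.le
      have h4 : τ ^ 2 ≤ 4 * θ ^ 2 * (n:ℝ) ^ 2 := by nlinarith
      have heq : (2 / Real.pi) ^ 2 * θ ^ 2 * ((n:ℝ) ^ 3 / 3) =
          4 * θ ^ 2 * (n:ℝ) ^ 3 / (3 * Real.pi ^ 2) := by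
        field_simp; ring
      rw [heq, div_mul_eq_mul_div, div_le_div_iff₀ (by positivity) (by positivity)]
      nlinarith [mul_le_mul_of_nonneg_right h4
        (show (0:ℝ) ≤ (n:ℝ) * (3 * Real.pi ^ 2) by positivity)]
    calc min (τ ^ 2 / (3 * Real.pi ^ 2)) (1 / 4) * n
        ≤ τ ^ 2 / (3 * Real.pi ^ 2) * n :=
          mul_le_mul_of_nonneg_right (min_le_left _ _) hn0.le
      _ ≤ _ := key.trans h1
  · -- big θ: use the cosine sum identity
    have h2 : 2 / Real.pi * θ ≤ Real.sin θ := Real.mul_le_sin hθ0.le hθπ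
    have hsinθ : 1 / n ≤ Real.sin θ := by
      have h3 : (1:ℝ) < 2 * θ * n / Real.pi := by
        rw [lt_div_iff₀ hπ]; nlinarith
      have h4 : 2 / Real.pi * θ * n = 2 * θ * n / Real.pi := by ring
      have h5 : 2 / Real.pi * θ * n ≤ Real.sin θ * n :=
        mul_le_mul_of_nonneg_right h2 hn0.le
      rw [div_le_iff₀ hn0]
      linarith [h4 ▸ h5]
    have hsinθ0 : 0 < Real.sin θ := lt_of_lt_of_le (by positivity) hsinθ
    have hsum := sum_cos_eq θ n
    have hsin1 : Real.sin ((2 * n + 1) * θ) ≤ 1 := Real.sin_le_one _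
    have hS : ∑ i ∈ Finset.Icc 1 n, Real.cos (2 * i * θ) ≤
        (1 - Real.sin θ) / (2 * Real.sin θ) := by
      rw [le_div_iff₀ (by positivity)]
      nlinarith
    have hrw : ∀ i : ℕ, Real.sin ((i : ℝ) * θ) ^ 2 = 1 / 2 - Real.cos (2 * i * θ) / 2 := by
      intro i
      rw [Real.sin_sq, Real.cos_sq]
      ring
    rw [Finset.sum_congr rfl fun i _ => hrw i, Finset.sum_sub_distrib, Finset.sum_const,
      Nat.card_Icc]
    simp only [Nat.add_sub_cancel, nsmul_eq_mul]
    have hsum2 : ∑ i ∈ Finset.Icc 1 n, Real.cos (2 * i * θ) / 2 ≤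
        (1 - Real.sin θ) / (4 * Real.sin θ) := by
      rw [← Finset.sum_div, show (1 - Real.sin θ) / (4 * Real.sin θ) =
        ((1 - Real.sin θ) / (2 * Real.sin θ)) / 2 by ring]
      linarith [hS]
    have hsn : 1 ≤ Real.sin θ * n := by
      rw [div_le_iff₀ hn0] at hsinθ; linarith
    have hs1 : Real.sin θ ≤ 1 := Real.sin_le_one θ
    have hfrac : (1 - Real.sin θ) / (4 * Real.sin θ) ≤ (n:ℝ) / 4 - 1 / 4 := by
      rw [div_le_iff₀ (by positivity), show ((n:ℝ) / 4 - 1 / 4) * (4 * Real.sin θ) =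
        (n:ℝ) * Real.sin θ - Real.sin θ by ring]
      linarith [hsn]
    have hmin : min (τ ^ 2 / (3 * Real.pi ^ 2)) (1 / 4) * (n:ℝ) ≤ (1 / 4 : ℝ) * (n:ℝ) :=
      mul_le_mul_of_nonneg_right (min_le_right _ _) hn0.le
    calc min (τ ^ 2 / (3 * Real.pi ^ 2)) (1 / 4) * (n:ℝ) ≤ (1 / 4 : ℝ) * (n:ℝ) := hmin
      _ ≤ (n : ℝ) * (1 / 2) - ((n:ℝ) / 4 - 1 / 4) := by linarith
      _ ≤ _ := by linarith [hsum2.trans hfrac]
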